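/- Let G be the simple graph on the 19-element vertex set {c} ∪ {s_t : t ∈ ZMod 6} ∪ {b_i : i ∈ ZMod 12} whose edges are exactly: c s_t for all t ∈ ZMod 6; s_t s_{t+1} for all t ∈ ZMod 6; b_i b_{i+1} for all i ∈ ZMod 12; and s_t b_{2t}, s_t b_{2t+1} for all t ∈ ZMod 6. Then for all i, j ∈ ZMod 12, the distance d_G(b_i, b_j) equals min(ℓ, 12 − ℓ, 4), where ℓ is the representative in {0, 1, …, 11} of i − j. In particular, the distances between the twelve vertices b_0, …, b_{11} are invariant under the cyclic shift b_i ↦ b_{i+1}. -/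

import Mathlib

abbrev CexV : Type := Unit ⊕ ZMod 6 ⊕ ZMod 12
def cV : CexV := Sum.inl ()
def sV (t : ZMod 6) : CexV := Sum.inr (Sum.inl t)
def bV (i : ZMod 12) : CexV := Sum.inr (Sum.inr i)

def adjP (u v : CexV) : Prop :=
      ((∃ t : ZMod 6, (u = cV ∧ v = sV t) ∨ (u = sV t ∧ v = cV)) ∨
       (∃ t : ZMod 6, (u = sV t ∧ v = sV (t + 1)) ∨ (u = sV (t + 1) ∧ v = sV t)) ∨
       (∃ i : ZMod 12, (u = bV i ∧ v = bV (i + 1)) ∨ (u = bV (i + 1) ∧ v = bV i)) ∨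
       (∃ t : ZMod 6, (u = sV t ∧ v = bV (2 * t.val)) ∨ (u = bV (2 * t.val) ∧ v = sV t)) ∨
       (∃ t : ZMod 6,
         (u = sV t ∧ v = bV (2 * t.val + 1)) ∨ (u = bV (2 * t.val + 1) ∧ v = sV t)))

instance adjPDec : ∀ u v, Decidable (adjP u v) := fun u v =>
  @instDecidableOr _ _ inferInstance (@instDecidableOr _ _ inferInstance
    (@instDecidableOr _ _ inferInstance (@instDecidableOr _ _ inferInstance inferInstance)))

def H : SimpleGraph CexV where
  Adj := adjP
  symm := ⟨by decide⟩
  loopless := ⟨by decide⟩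

instance : DecidableRel H.Adj := fun u v => adjPDec u v

/-- Fast Boolean adjacency test. -/
def adjB : CexV → CexV → Bool
  | Sum.inl _, Sum.inr (Sum.inl _) => true
  | Sum.inr (Sum.inl _), Sum.inl _ => true
  | Sum.inr (Sum.inl t), Sum.inr (Sum.inl t') =>
      (t.val + 1) % 6 == t'.val || (t'.val + 1) % 6 == t.val
  | Sum.inr (Sum.inr i), Sum.inr (Sum.inr j) =>
      (i.val + 1) % 12 == j.val || (j.val + 1) % 12 == i.val
  | Sum.inr (Sum.inl t), Sum.inr (Sum.inr i) => i.val == 2 * t.val || i.val == 2 * t.val + 1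
  | Sum.inr (Sum.inr i), Sum.inr (Sum.inl t) => i.val == 2 * t.val || i.val == 2 * t.val + 1
  | _, _ => false

lemma adjB_iff : ∀ u v : CexV, H.Adj u v ↔ adjB u v = true := by decide

def ball : ℕ → CexV → Finset CexV
  | 0, u => {u}
  | n+1, u => ball n u ∪ Finset.univ.filter (fun v => ∃ w ∈ ball n u, adjB w v = true)

lemma mem_ball : ∀ (n : ℕ) (u v : CexV), v ∈ ball n u ↔ ∃ p : H.Walk v u, p.length ≤ n := by
  intro n
  induction n with
  | zero =>
    intro u v
    simp only [ball, Finset.mem_singleton]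
    constructor
    · rintro rfl; exact ⟨SimpleGraph.Walk.nil, le_refl 0⟩
    · rintro ⟨p, hp⟩
      cases p with
      | nil => rfl
      | cons h q => simp at hp
  | succ n ih =>
    intro u v
    constructor
    · intro hv
      rcases Finset.mem_union.1 hv with h | h
      · rcases (ih u v).1 h with ⟨p, hp⟩; exact ⟨p, hp.trans (Nat.le_succ n)⟩
      · simp only [Finset.mem_filter] at h
        rcases h.2 with ⟨w, hw, hadj⟩
        rcases (ih u w).1 hw with ⟨p, hp⟩
        exact ⟨SimpleGraph.Walk.cons (H.adj_symm ((adjB_iff w v).2 hadj)) p, by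
          simpa using Nat.succ_le_succ hp⟩
    · rintro ⟨p, hp⟩
      cases p with
      | nil =>
        exact Finset.mem_union_left _ ((ih u u).2 ⟨SimpleGraph.Walk.nil, Nat.zero_le n⟩)
      | @cons _ w _ hadj q =>
        apply Finset.mem_union_right
        simp only [Finset.mem_filter]
        refine ⟨Finset.mem_univ _, w, (ih u w).2 ⟨q, ?_⟩, (adjB_iff w v).1 (H.adj_symm hadj)⟩
        simpa using Nat.le_of_succ_le_succ hp

lemma dist_eq_of_ball (u v : CexV) (n : ℕ) (h1 : v ∈ ball n u)
    (h2 : n = 0 ∨ v ∉ ball (n-1) u) : H.dist u v = n := by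
  obtain ⟨p, hp⟩ := (mem_ball n u v).1 h1
  have hr : H.Reachable u v := p.reverse.reachable
  have hle : H.dist u v ≤ n := le_trans (SimpleGraph.dist_le p.reverse) (by simpa using hp)
  rcases h2 with rfl | h2
  · omega
  · by_contra hne
    have hlt : H.dist u v < n := lt_of_le_of_ne hle hne
    obtain ⟨q, hq⟩ := hr.exists_walk_length_eq_dist
    exact h2 ((mem_ball (n-1) u v).2 ⟨q.reverse, by simp [hq]; omega⟩)

set_option maxHeartbeats 4000000 in
theorem figure4_distances (G : SimpleGraph CexV)
    (hAdj : ∀ u v : CexV, G.Adj u v ↔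
      ((∃ t : ZMod 6, (u = cV ∧ v = sV t) ∨ (u = sV t ∧ v = cV)) ∨
       (∃ t : ZMod 6, (u = sV t ∧ v = sV (t + 1)) ∨ (u = sV (t + 1) ∧ v = sV t)) ∨
       (∃ i : ZMod 12, (u = bV i ∧ v = bV (i + 1)) ∨ (u = bV (i + 1) ∧ v = bV i)) ∨
       (∃ t : ZMod 6, (u = sV t ∧ v = bV (2 * t.val)) ∨ (u = bV (2 * t.val) ∧ v = sV t)) ∨
       (∃ t : ZMod 6,
         (u = sV t ∧ v = bV (2 * t.val + 1)) ∨ (u = bV (2 * t.val + 1) ∧ v = sV t)))) :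
    (∀ i j : ZMod 12,
      G.dist (bV i) (bV j) = min (min (i - j).val (12 - (i - j).val)) 4) ∧
    (∀ i j : ZMod 12, G.dist (bV (i + 1)) (bV (j + 1)) = G.dist (bV i) (bV j)) := by
  have hG : G = H := by
    ext u v
    rw [hAdj]
    exact Iff.rfl
  subst hG
  have key : ∀ i j : ZMod 12,
      bV j ∈ ball (min (min (i - j).val (12 - (i - j).val)) 4) (bV i) ∧
      (min (min (i - j).val (12 - (i - j).val)) 4 = 0 ∨
        bV j ∉ ball (min (min (i - j).val (12 - (i - j).val)) 4 - 1) (bV i)) := by decide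
  have h1 : ∀ i j : ZMod 12,
      H.dist (bV i) (bV j) = min (min (i - j).val (12 - (i - j).val)) 4 :=
    fun i j => dist_eq_of_ball _ _ _ (key i j).1 (key i j).2
  refine ⟨h1, fun i j => ?_⟩
  rw [h1, h1, add_sub_add_right_eq_sub]
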